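/- Every finite word w contains at most |w| + 1 distinct palindromic factors (including the empty word). -/

import Mathlib

/-- The set of palindromic factors of a word `w` (including the empty word). -/
def palFactors {α : Type*} [DecidableEq α] (w : List α) : Finset (List α) :=
  ((w.inits.flatMap List.tails).filter fun u => u.reverse = u).toFinset

/-- A word is rich if it has `|w| + 1` distinct palindromic factors
(including the empty word). -/
def Rich {α : Type*} [DecidableEq α] (w : List α) : Prop :=
  (palFactors w).card = w.length + 1

lemma mem_palFactors {α : Type*} [DecidableEq α] {w u : List α} :
    u ∈ palFactors w ↔ u <:+: w ∧ u.reverse = u := by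
  simp only [palFactors, List.mem_toFinset, List.mem_filter, List.mem_flatMap,
    List.mem_inits, List.mem_tails, decide_eq_true_eq]
  constructor
  · rintro ⟨⟨p, hp, hup⟩, hr⟩
    exact ⟨hup.isInfix.trans hp.isInfix, hr⟩
  · rintro ⟨⟨s, t, hst⟩, hr⟩
    exact ⟨⟨s ++ u, ⟨t, by simpa [List.append_assoc] using hst⟩, ⟨s, rfl⟩⟩, hr⟩

lemma suffix_of_new {α : Type*} [DecidableEq α] {w u : List α} {a : α}
    (h : u <:+: w ++ [a]) (h' : ¬ u <:+: w) : u <:+ w ++ [a] := by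
  obtain ⟨s, t, hst⟩ := h
  rcases List.eq_nil_or_concat t with rfl | ⟨t', b, rfl⟩
  · exact ⟨s, by simpa using hst⟩
  · exfalso
    apply h'
    refine ⟨s, t', ?_⟩
    have := congrArg List.dropLast hst
    simpa [← List.append_assoc, List.dropLast_concat] using this

lemma new_pal_eq_aux {α : Type*} [DecidableEq α] {w u v : List α} {a : α}
    (hu : u <:+: w ++ [a]) (hur : u.reverse = u) (hu' : ¬ u <:+: w)
    (hv : v <:+: w ++ [a]) (hvr : v.reverse = v) (hv' : ¬ v <:+: w)
    (hlen : u.length ≤ v.length) : u = v := by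
  have hus : u <:+ w ++ [a] := suffix_of_new hu hu'
  have hvs : v <:+ w ++ [a] := suffix_of_new hv hv'
  have huv : u <:+ v := List.suffix_of_suffix_length_le hus hvs hlen
  rcases eq_or_lt_of_le hlen with heq | hlt
  · exact List.IsSuffix.eq_of_length huv heq
  · exfalso
    apply hu'
    -- u is also a prefix of v, since v is a palindrome
    have hup : u <+: v := by
      have := huv.reverse
      rwa [hur, hvr] at this
    obtain ⟨r, hr⟩ := hup
    obtain ⟨s, hs⟩ := hvs
    rcases List.eq_nil_or_concat r with rfl | ⟨r', b, rfl⟩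
    · rw [List.append_nil] at hr
      rw [← hr] at hlt
      exact absurd hlt (lt_irrefl _)
    · refine ⟨s, r', ?_⟩
      have hst : s ++ (u ++ (r' ++ [b])) = w ++ [a] := by
        rw [show r' ++ [b] = r'.concat b from List.concat_eq_append.symm, hr]; exact hs
      have := congrArg List.dropLast hst
      simpa [← List.append_assoc, List.dropLast_concat] using this

lemma new_pal_eq {α : Type*} [DecidableEq α] {w u v : List α} {a : α}
    (hu : u <:+: w ++ [a]) (hur : u.reverse = u) (hu' : ¬ u <:+: w)
    (hv : v <:+: w ++ [a]) (hvr : v.reverse = v) (hv' : ¬ v <:+: w) : u = v := by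
  rcases le_total u.length v.length with h | h
  · exact new_pal_eq_aux hu hur hu' hv hvr hv' h
  · exact (new_pal_eq_aux hv hvr hv' hu hur hu' h).symm

/-- every finite word contains at most  distinct palindromic
factors (including the empty word). -/
theorem stmt_12 {α : Type*} [DecidableEq α] (w : List α) :
    (palFactors w).card ≤ w.length + 1 := by
  induction w using List.reverseRecOn with
  | nil => simp [palFactors]
  | append_singleton w a ih =>
    have hdiff : (palFactors (w ++ [a]) \ palFactors w).card ≤ 1 := by
      apply Finset.card_le_one.mpr
      intro u hu v hv
      simp only [Finset.mem_sdiff, mem_palFactors] at hu hv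
      exact new_pal_eq hu.1.1 hu.1.2 (fun h => hu.2 ⟨h, hu.1.2⟩)
        hv.1.1 hv.1.2 (fun h => hv.2 ⟨h, hv.1.2⟩)
    calc (palFactors (w ++ [a])).card
        ≤ (palFactors (w ++ [a]) \ palFactors w).card + (palFactors w).card :=
          Finset.card_le_card_sdiff_add_card
      _ ≤ 1 + (w.length + 1) := Nat.add_le_add hdiff ih
      _ = (w ++ [a]).length + 1 := by simp [List.length_append]; omega
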